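/- arXiv:1702.02690 — 2 statements merged into one kernel-verified Lean document; each statement's English description precedes it below -/
import Mathlib

section
/- (Lemma 1: asymptotic orthogonality of user channels with distinct angles of arrival.) Let P ≥ 1. Let f_1, …, f_P ∈ ℝ and g_1, …, g_P ∈ ℝ be such that: (i) f_i − f_j ∉ ℤ and g_i − g_j ∉ ℤ for all i ≠ j; (ii) f_i − g_j ∉ ℤ for all i, j. Let α_1, …, α_P ∈ ℂ and β_1, …, β_P ∈ ℂ, each not identically zero. For each M ≥ 1 define the instantaneous channel vectors h_M = Σ_{p=1}^{P} α_p · a_M(f_p) and h'_M = Σ_{p=1}^{P} β_p · a_M(g_p) in ℂ^M. Then the correlation coefficient γ_M = ⟨h_M, h'_M⟩ / (‖h_M‖ · ‖h'_M‖) tends to 0 as M → ∞. -/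
open scoped Real
open Filter Finset

/-- The steering vector `a_M(f) ∈ ℂ^M`, whose `m`-th entry is `e^{-2πi m f}`. -/
noncomputable def steer (M : ℕ) (f : ℝ) : EuclideanSpace ℂ (Fin M) :=
  WithLp.toLp 2 (fun m => Complex.exp (-(2 * (π : ℂ) * Complex.I * ((m : ℕ) : ℂ) * (f : ℂ))))

noncomputable def wz (x : ℝ) : ℂ := Complex.exp (-(2 * (π : ℂ) * Complex.I * (x : ℂ)))

lemma wz_ne_one {x : ℝ} (hx : ∀ k : ℤ, x ≠ (k : ℝ)) : wz x ≠ 1 := by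
  intro h
  rw [wz, Complex.exp_eq_one_iff] at h
  obtain ⟨n, hn⟩ := h
  apply hx (-n)
  have h2 : (2 * (π : ℂ) * Complex.I) ≠ 0 := by
    simp [Real.pi_ne_zero, Complex.I_ne_zero, Complex.ofReal_ne_zero]
  have h3 : (x : ℂ) * (2 * (π : ℂ) * Complex.I) = (-(n:ℂ)) * (2 * (π : ℂ) * Complex.I) := by
    linear_combination -hn
  have h4 : (x : ℂ) = ((-n : ℤ) : ℂ) := by
    have := mul_right_cancel₀ h2 h3
    push_cast
    linear_combination this
  exact_mod_cast h4

lemma norm_wz (x : ℝ) : ‖wz x‖ = 1 := by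
  have : (-(2 * (π : ℂ) * Complex.I * (x : ℂ))) = ((-(2 * π * x) : ℝ) : ℂ) * Complex.I := by
    push_cast; ring
  rw [wz, this, Complex.norm_exp_ofReal_mul_I]

lemma geom_bound {x : ℝ} (hx : ∀ k : ℤ, x ≠ (k : ℝ)) (M : ℕ) :
    ‖∑ m ∈ Finset.range M, (wz x) ^ m‖ ≤ 2 / ‖wz x - 1‖ := by
  have hne := wz_ne_one hx
  rw [geom_sum_eq hne, norm_div]
  have hpos : 0 < ‖wz x - 1‖ := by
    rw [norm_pos_iff]; exact sub_ne_zero.mpr hne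
  gcongr
  calc ‖wz x ^ M - 1‖ ≤ ‖wz x ^ M‖ + ‖(1:ℂ)‖ := norm_sub_le _ _
    _ = 2 := by rw [norm_pow, norm_wz]; norm_num

lemma inner_steer (M : ℕ) (f g : ℝ) :
    (inner ℂ (steer M f) (steer M g) : ℂ) = ∑ m ∈ Finset.range M, (wz (g - f)) ^ m := by
  rw [PiLp.inner_apply, ← Fin.sum_univ_eq_sum_range (fun m => (wz (g-f))^m) M]
  congr 1
  ext m
  rw [steer, steer, RCLike.inner_apply']
  simp only [PiLp.toLp_apply]
  rw [← Complex.exp_conj, ← Complex.exp_add, wz, ← Complex.exp_nat_mul]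
  congr 1
  have : (starRingEnd ℂ) (-(2 * (π:ℂ) * Complex.I * ((m:ℕ):ℂ) * (f:ℂ)))
      = (2 * (π:ℂ) * Complex.I * ((m:ℕ):ℂ) * (f:ℂ)) := by
    simp only [map_neg, map_mul, Complex.conj_I, Complex.conj_ofReal, map_ofNat,
      Complex.conj_natCast]
    ring
  rw [this]
  push_cast
  ring

lemma inner_steer_self (M : ℕ) (f : ℝ) :
    (inner ℂ (steer M f) (steer M f) : ℂ) = (M : ℂ) := by
  rw [inner_steer]
  simp [wz, sub_self]

lemma inner_channels (M P : ℕ) (f g : Fin P → ℝ) (α β : Fin P → ℂ) :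
    (inner ℂ (∑ p, α p • steer M (f p)) (∑ p, β p • steer M (g p)) : ℂ)
      = ∑ p, ∑ q, (starRingEnd ℂ) (α p) * β q * inner ℂ (steer M (f p)) (steer M (g q)) := by
  rw [sum_inner]
  congr 1; funext p
  rw [inner_sum]
  congr 1; funext q
  rw [inner_smul_left, inner_smul_right]
  ring

lemma normsq_ge (P : ℕ) (f : Fin P → ℝ)
    (hff : ∀ i j : Fin P, i ≠ j → ∀ k : ℤ, f i - f j ≠ (k : ℝ)) (α : Fin P → ℂ) (M : ℕ) :
    (∑ p, ‖α p‖^2) * M -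
        (∑ p, ∑ q ∈ Finset.univ.erase p, ‖α p‖ * ‖α q‖ * (2 / ‖wz (f q - f p) - 1‖))
      ≤ ‖∑ p, α p • steer M (f p)‖^2 := by
  set T : Fin P → Fin P → ℂ :=
    fun p q => (starRingEnd ℂ) (α p) * α q * inner ℂ (steer M (f p)) (steer M (f q)) with hT
  have hin : (inner ℂ (∑ p, α p • steer M (f p)) (∑ p, α p • steer M (f p)) : ℂ)
      = (∑ p, T p p) + ∑ p, ∑ q ∈ Finset.univ.erase p, T p q := by
    rw [inner_channels]
    rw [← Finset.sum_add_distrib]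
    congr 1; funext p
    exact (Finset.add_sum_erase _ (T p) (Finset.mem_univ p)).symm
  have hdiag : (∑ p, T p p) = (((∑ p, ‖α p‖^2) * M : ℝ) : ℂ) := by
    calc ∑ p, T p p = ∑ p, ((‖α p‖^2 : ℝ) : ℂ) * (M : ℂ) :=
          Finset.sum_congr rfl (fun p _ => by
            show (starRingEnd ℂ) (α p) * α p * inner ℂ (steer M (f p)) (steer M (f p))
              = ((‖α p‖^2 : ℝ) : ℂ) * (M : ℂ)
            rw [inner_steer_self, RCLike.conj_mul]; push_cast; rfl)
      _ = (((∑ p, ‖α p‖^2) * M : ℝ) : ℂ) := by push_cast; rw [Finset.sum_mul]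
  have hEbound : ‖∑ p, ∑ q ∈ Finset.univ.erase p, T p q‖
      ≤ ∑ p, ∑ q ∈ Finset.univ.erase p, ‖α p‖ * ‖α q‖ * (2 / ‖wz (f q - f p) - 1‖) := by
    refine (norm_sum_le _ _).trans (Finset.sum_le_sum fun p _ => ?_)
    refine (norm_sum_le _ _).trans (Finset.sum_le_sum fun q hq => ?_)
    have hq' : q ≠ p := Finset.ne_of_mem_erase hq
    rw [hT, norm_mul, norm_mul, RCLike.norm_conj]
    gcongr
    rw [inner_steer]
    exact geom_bound (hff q p hq') M
  have hre : ‖∑ p, α p • steer M (f p)‖^2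
      = ((∑ p, ‖α p‖^2) * M) + (∑ p, ∑ q ∈ Finset.univ.erase p, T p q).re := by
    rw [norm_sq_eq_re_inner (𝕜 := ℂ), hin, hdiag]
    simp only [RCLike.re_to_complex, Complex.add_re, Complex.ofReal_re]
  rw [hre]
  have : -‖∑ p, ∑ q ∈ Finset.univ.erase p, T p q‖
      ≤ (∑ p, ∑ q ∈ Finset.univ.erase p, T p q).re := by
    have := Complex.abs_re_le_norm (∑ p, ∑ q ∈ Finset.univ.erase p, T p q)
    linarith [neg_abs_le (∑ p, ∑ q ∈ Finset.univ.erase p, T p q).re]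
  linarith [hEbound]

lemma sqrt_tendsto_atTop : Filter.Tendsto Real.sqrt Filter.atTop Filter.atTop :=
  Filter.tendsto_atTop_atTop.mpr fun b => ⟨max 0 b ^ 2, fun a ha => by
    calc b ≤ max 0 b := le_max_right _ _
      _ = Real.sqrt ((max 0 b)^2) := (Real.sqrt_sq (le_max_left _ _)).symm
      _ ≤ Real.sqrt a := Real.sqrt_le_sqrt ha⟩

lemma norm_chan_tendsto (P : ℕ) (f : Fin P → ℝ)
    (hff : ∀ i j : Fin P, i ≠ j → ∀ k : ℤ, f i - f j ≠ (k : ℝ)) (α : Fin P → ℂ)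
    (hα : ∃ p, α p ≠ 0) :
    Filter.Tendsto (fun M : ℕ => ‖∑ p, α p • steer M (f p)‖) Filter.atTop Filter.atTop := by
  set A := ∑ p, ‖α p‖^2 with hA
  set B := ∑ p, ∑ q ∈ Finset.univ.erase p, ‖α p‖ * ‖α q‖ * (2 / ‖wz (f q - f p) - 1‖) with hB
  obtain ⟨p₀, hp₀⟩ := hα
  have hApos : 0 < A :=
    Finset.sum_pos' (fun p _ => sq_nonneg _)
      ⟨p₀, Finset.mem_univ _, pow_pos (norm_pos_iff.mpr hp₀) 2⟩
  have hlin : Filter.Tendsto (fun M : ℕ => A * M - B) Filter.atTop Filter.atTop := by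
    have h1 : Filter.Tendsto (fun M : ℕ => A * (M : ℝ)) Filter.atTop Filter.atTop :=
      (tendsto_natCast_atTop_atTop (R := ℝ)).const_mul_atTop hApos
    simpa [sub_eq_add_neg] using Filter.tendsto_atTop_add_const_right _ (-B) h1
  have hsq : Filter.Tendsto (fun M : ℕ => Real.sqrt (A * M - B)) Filter.atTop Filter.atTop :=
    sqrt_tendsto_atTop.comp hlin
  refine Filter.tendsto_atTop_mono (fun M => ?_) hsq
  calc Real.sqrt (A * M - B) ≤ Real.sqrt (‖∑ p, α p • steer M (f p)‖^2) :=
        Real.sqrt_le_sqrt (normsq_ge P f hff α M)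
    _ = ‖∑ p, α p • steer M (f p)‖ := Real.sqrt_sq (norm_nonneg _)

/-- Lemma 1: asymptotic orthogonality of user channels with distinct AOAs:
with `f_i − f_j ∉ ℤ`, `g_i − g_j ∉ ℤ` for `i ≠ j`, `f_i − g_j ∉ ℤ` for all `i, j`, and
gain vectors `α, β` not identically zero, the correlation
`γ_M = ⟨h_M, h'_M⟩ / (‖h_M‖·‖h'_M‖)` of the channels `h_M = Σ_p α_p a_M(f_p)` and
`h'_M = Σ_p β_p a_M(g_p)` tends to `0` as `M → ∞`. -/
theorem stmt6 (P : ℕ) (hP : 1 ≤ P) (f g : Fin P → ℝ)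
    (hff : ∀ i j : Fin P, i ≠ j → ∀ k : ℤ, f i - f j ≠ (k : ℝ))
    (hgg : ∀ i j : Fin P, i ≠ j → ∀ k : ℤ, g i - g j ≠ (k : ℝ))
    (hfg : ∀ i j : Fin P, ∀ k : ℤ, f i - g j ≠ (k : ℝ))
    (α β : Fin P → ℂ) (hα : ∃ p, α p ≠ 0) (hβ : ∃ p, β p ≠ 0) :
    Filter.Tendsto
      (fun M : ℕ =>
        (inner ℂ (∑ p, α p • steer M (f p)) (∑ p, β p • steer M (g p)) : ℂ) /
          (((‖∑ p, α p • steer M (f p)‖ : ℝ) : ℂ) * ((‖∑ p, β p • steer M (g p)‖ : ℝ) : ℂ)))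
      Filter.atTop (nhds 0) := by
  set C := ∑ p : Fin P, ∑ q : Fin P, ‖α p‖ * ‖β q‖ * (2 / ‖wz (g q - f p) - 1‖) with hCdef
  have hfg' : ∀ p q : Fin P, ∀ k : ℤ, g q - f p ≠ (k : ℝ) := by
    intro p q k h
    apply hfg p q (-k)
    push_cast
    linarith
  have hC : ∀ M : ℕ, ‖(inner ℂ (∑ p, α p • steer M (f p)) (∑ p, β p • steer M (g p)) : ℂ)‖ ≤ C := by
    intro M
    rw [inner_channels]
    refine (norm_sum_le _ _).trans (Finset.sum_le_sum fun p _ => ?_)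
    refine (norm_sum_le _ _).trans (Finset.sum_le_sum fun q _ => ?_)
    rw [norm_mul, norm_mul, RCLike.norm_conj, inner_steer]
    gcongr
    exact geom_bound (hfg' p q) M
  have hdenom : Filter.Tendsto
      (fun M : ℕ => ‖∑ p, α p • steer M (f p)‖ * ‖∑ p, β p • steer M (g p)‖)
      Filter.atTop Filter.atTop :=
    (norm_chan_tendsto P f hff α hα).atTop_mul_atTop₀ (norm_chan_tendsto P g hgg β hβ)
  have hg0 : Filter.Tendsto
      (fun M : ℕ => C / (‖∑ p, α p • steer M (f p)‖ * ‖∑ p, β p • steer M (g p)‖))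
      Filter.atTop (nhds 0) :=
    Filter.Tendsto.div_atTop tendsto_const_nhds hdenom
  refine squeeze_zero_norm (fun M => ?_) hg0
  rw [norm_div]
  have hden : ‖((‖∑ p, α p • steer M (f p)‖ : ℝ) : ℂ) * ((‖∑ p, β p • steer M (g p)‖ : ℝ) : ℂ)‖
      = ‖∑ p, α p • steer M (f p)‖ * ‖∑ p, β p • steer M (g p)‖ := by
    rw [norm_mul, Complex.norm_real, Complex.norm_real, Real.norm_of_nonneg (norm_nonneg _),
      Real.norm_of_nonneg (norm_nonneg _)]
  rw [hden]
  exact div_le_div_of_nonneg_right (hC M) (mul_nonneg (norm_nonneg _) (norm_nonneg _))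
end

section
/- Let P ≥ 1, let f_1, …, f_P ∈ ℝ satisfy f_i − f_j ∉ ℤ for all i ≠ j, and let α_1, …, α_P ∈ ℂ with Σ_{p=1}^{P} |α_p|² > 0. For each M ≥ 1 let h_M = Σ_{p=1}^{P} α_p · a_M(f_p) ∈ ℂ^M. Then there exists M₀ such that for all M ≥ M₀, h_M ≠ 0; in fact ‖h_M‖² ≥ (M/2) · Σ_{p=1}^{P} |α_p|² for all sufficiently large M. -/
open scoped Real InnerProductSpace
open Complex

lemma steer_inner (M : ℕ) (f g : ℝ) :
    ⟪steer M f, steer M g⟫_ℂ = ∑ m : Fin M, Complex.exp (-(2 * π * I * (g - f))) ^ (m : ℕ) := by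
  simp only [PiLp.inner_apply, RCLike.inner_apply', steer, PiLp.toLp_apply]
  refine Finset.sum_congr rfl fun m _ => ?_
  rw [← Complex.exp_nat_mul, ← Complex.exp_conj, ← Complex.exp_add]
  congr 1
  simp only [map_neg, map_mul, Complex.conj_I, Complex.conj_ofReal, Complex.conj_natCast,
    map_ofNat]
  ring

lemma exp_ne_one {x : ℝ} (hx : ∀ k : ℤ, x ≠ (k:ℝ)) :
    Complex.exp (-(2 * π * I * x)) ≠ 1 := by
  intro h
  rw [Complex.exp_eq_one_iff] at h
  obtain ⟨n, hn⟩ := h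
  apply hx (-n)
  have h2 : (2 * (π:ℂ) * I) ≠ 0 := by
    simp [Real.pi_ne_zero, Complex.I_ne_zero, Complex.ofReal_ne_zero]
  have h3 : (2 * (π:ℂ) * I) * (-(x:ℂ)) = (2 * (π:ℂ) * I) * n := by linear_combination hn
  have h4 := mul_left_cancel₀ h2 h3
  have : (x:ℂ) = ((-n : ℤ) : ℂ) := by push_cast; linear_combination -h4
  exact_mod_cast this

lemma geom_bound_s12 {z : ℂ} (hz : ‖z‖ = 1) (hz1 : z ≠ 1) (M : ℕ) :
    ‖∑ m : Fin M, z ^ (m : ℕ)‖ ≤ 2 / ‖z - 1‖ := by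
  rw [Fin.sum_univ_eq_sum_range, geom_sum_eq hz1, norm_div]
  have hpos : 0 < ‖z - 1‖ := norm_pos_iff.mpr (sub_ne_zero.mpr hz1)
  apply div_le_div_of_nonneg_right ?_ hpos.le
  calc ‖z ^ M - 1‖ ≤ ‖z ^ M‖ + ‖(1:ℂ)‖ := by
        simpa using norm_sub_le (z ^ M) 1
    _ = 2 := by rw [norm_pow, hz]; norm_num

/-- for `P ≥ 1`, frequencies with `f_i − f_j ∉ ℤ` for `i ≠ j`, and gains
with `Σ_p |α_p|² > 0`, the channel `h_M = Σ_p α_p a_M(f_p)` is eventually nonzero; in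
fact `‖h_M‖² ≥ (M/2)·Σ_p |α_p|²` for all sufficiently large `M`. -/
theorem stmt12 (P : ℕ) (hP : 1 ≤ P) (f : Fin P → ℝ)
    (hf : ∀ i j : Fin P, i ≠ j → ∀ k : ℤ, f i - f j ≠ (k : ℝ))
    (α : Fin P → ℂ) (hα : 0 < ∑ p, ‖α p‖ ^ 2) :
    ∃ M₀ : ℕ, ∀ M : ℕ, M₀ ≤ M →
      (∑ p, α p • steer M (f p)) ≠ 0 ∧
      ((M : ℝ) / 2) * ∑ p, ‖α p‖ ^ 2 ≤ ‖∑ p, α p • steer M (f p)‖ ^ 2 := by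
  set S : ℝ := ∑ p, ‖α p‖ ^ 2 with hS
  -- z p q and bounds
  set z : Fin P → Fin P → ℂ := fun p q => Complex.exp (-(2 * π * I * (f q - f p))) with hz
  have hzabs : ∀ p q, ‖z p q‖ = 1 := by
    intro p q
    rw [hz]
    simp [Complex.norm_exp]
  have hzne : ∀ p q, p ≠ q → z p q ≠ 1 := by
    intro p q hpq
    simp only [hz]
    have hcast : ((f q : ℂ) - (f p : ℂ)) = ((f q - f p : ℝ) : ℂ) := by push_cast; ring
    rw [hcast]
    exact exp_ne_one (hf q p (Ne.symm hpq))
  set B : Fin P → Fin P → ℝ := fun p q => 2 / ‖z p q - 1‖ with hB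
  have hBnn : ∀ p q, 0 ≤ B p q := fun p q => by positivity
  set C : ℝ := ∑ p, ∑ q, (if p = q then 0 else ‖α p‖ * ‖α q‖ * B p q)
    with hC
  have hCnn : 0 ≤ C := by
    apply Finset.sum_nonneg; intro p _
    apply Finset.sum_nonneg; intro q _
    split
    · exact le_rfl
    · positivity
  -- key estimate
  have key : ∀ M : ℕ, (M : ℝ) * S - C ≤ ‖∑ p, α p • steer M (f p)‖ ^ 2 := by
    intro M
    rw [InnerProductSpace.norm_sq_eq_re_inner (𝕜 := ℂ)]
    have hexp : (inner ℂ (∑ p, α p • steer M (f p)) (∑ p, α p • steer M (f p)) : ℂ)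
        = ∑ p, ∑ q, (starRingEnd ℂ) (α p) * α q * ∑ m : Fin M, z p q ^ (m : ℕ) := by
      rw [sum_inner]
      refine Finset.sum_congr rfl fun p _ => ?_
      rw [inner_sum]
      refine Finset.sum_congr rfl fun q _ => ?_
      rw [inner_smul_left, inner_smul_right, steer_inner]
      ring
    rw [hexp]
    simp only [RCLike.re_to_complex]
    rw [Complex.re_sum]
    have : ∀ p, Complex.re (∑ q, (starRingEnd ℂ) (α p) * α q * ∑ m : Fin M, z p q ^ (m : ℕ))
        = ∑ q, Complex.re ((starRingEnd ℂ) (α p) * α q * ∑ m : Fin M, z p q ^ (m : ℕ)) :=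
      fun p => Complex.re_sum _ _
    simp only [this]
    have lower : ∀ p q, ((if p = q then (M:ℝ) * ‖α p‖ ^ 2 else 0)
        - (if p = q then 0 else ‖α p‖ * ‖α q‖ * B p q))
        ≤ Complex.re ((starRingEnd ℂ) (α p) * α q * ∑ m : Fin M, z p q ^ (m : ℕ)) := by
      intro p q
      by_cases hpq : p = q
      · subst hpq
        have hz1 : z p p = 1 := by simp only [hz]; simp
        have haa : (starRingEnd ℂ) (α p) * α p = ((‖α p‖ ^ 2 : ℝ) : ℂ) := by
          rw [mul_comm, Complex.mul_conj, Complex.normSq_eq_norm_sq]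
        have heq : ((starRingEnd ℂ) (α p) * α p * ∑ m : Fin M, z p p ^ (m : ℕ))
            = (((M : ℝ) * ‖α p‖ ^ 2 : ℝ) : ℂ) := by
          rw [hz1, haa]
          simp only [one_pow, Finset.sum_const, Finset.card_univ, Fintype.card_fin,
            nsmul_eq_mul, mul_one]
          push_cast
          ring
        rw [heq, Complex.ofReal_re]
        simp
      · simp only [if_neg hpq, zero_sub]
        have habs : ‖(starRingEnd ℂ) (α p) * α q * ∑ m : Fin M, z p q ^ (m : ℕ)‖
            ≤ ‖α p‖ * ‖α q‖ * B p q := by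
          rw [norm_mul, norm_mul, Complex.norm_conj]
          gcongr
          · exact geom_bound_s12 (hzabs p q) (hzne p q hpq) M
        have := Complex.abs_re_le_norm ((starRingEnd ℂ) (α p) * α q * ∑ m : Fin M, z p q ^ (m : ℕ))
        nlinarith [abs_le.mp (le_trans this habs)]
    calc (M:ℝ) * S - C
        = ∑ p, ∑ q, ((if p = q then (M:ℝ) * ‖α p‖ ^ 2 else 0)
            - (if p = q then 0 else ‖α p‖ * ‖α q‖ * B p q)) := by
          rw [hS, hC]
          simp only [Finset.sum_sub_distrib]
          congr 1
          rw [Finset.mul_sum]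
          refine Finset.sum_congr rfl fun p _ => ?_
          simp [Finset.sum_ite_eq]
      _ ≤ _ := by
          apply Finset.sum_le_sum; intro p _
          apply Finset.sum_le_sum; intro q _
          exact lower p q
  -- choose M₀
  refine ⟨max 1 ⌈2 * C / S⌉₊, fun M hM => ?_⟩
  have hM1 : 1 ≤ M := le_trans (le_max_left _ _) hM
  have hMC : 2 * C / S ≤ (M : ℝ) := by
    calc 2 * C / S ≤ (⌈2 * C / S⌉₊ : ℝ) := Nat.le_ceil _
      _ ≤ (M : ℝ) := by exact_mod_cast le_trans (le_max_right _ _) hM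
  have hC2 : C ≤ (M : ℝ) * S / 2 := by
    rw [div_le_iff₀ hα] at hMC
    linarith
  have hmain : ((M : ℝ) / 2) * S ≤ ‖∑ p, α p • steer M (f p)‖ ^ 2 := by
    have := key M
    linarith
  refine ⟨?_, hmain⟩
  intro h0
  rw [h0, norm_zero] at hmain
  have : 0 < ((M:ℝ)/2) * S := by
    apply mul_pos _ hα
    positivity
  simp at hmain
  linarith
end
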